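/- arXiv:2405.19461 — 2 statements merged into one kernel-verified Lean document; each statement's English description precedes it below -/
import Mathlib

section
/- (Identity underlying Theorem 1 of the paper.) Let S be a nonempty finite indexed family of points in a real inner product space H, partitioned into two disjoint nonempty subfamilies T and V. Then the squared distance between the two cluster centroids satisfies ‖μ_T − μ_V‖² = ((|T| + |V|)/(|T|·|V|)) · (SSQ(S) − SSQ(T) − SSQ(V)). -/
open Finset

variable {ι H : Type*} [DecidableEq ι] [NormedAddCommGroup H] [InnerProductSpace ℝ H]

/-- The centroid of the finite indexed family of points `f i`, `i ∈ A`. -/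
noncomputable def centroid (f : ι → H) (A : Finset ι) : H :=
  (A.card : ℝ)⁻¹ • ∑ i ∈ A, f i

/-- The sum of squared deviations of the family `f i`, `i ∈ A` from its centroid. -/
noncomputable def SSQ (f : ι → H) (A : Finset ι) : ℝ :=
  ∑ i ∈ A, ‖f i - centroid f A‖ ^ 2

lemma sum_eq_card_smul_centroid (f : ι → H) (A : Finset ι) (hA : A.Nonempty) :
    ∑ i ∈ A, f i = (A.card : ℝ) • centroid f A := by
  have h : (A.card : ℝ) ≠ 0 := Nat.cast_ne_zero.mpr (Finset.card_ne_zero_of_mem hA.choose_spec)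
  rw [_root_.centroid, smul_smul, mul_inv_cancel₀ h, one_smul]

lemma parallel_axis (f : ι → H) (A : Finset ι) (hA : A.Nonempty) (c : H) :
    ∑ i ∈ A, ‖f i - c‖ ^ 2 = SSQ f A + (A.card : ℝ) * ‖centroid f A - c‖ ^ 2 := by
  have hzero : ∑ i ∈ A, (f i - centroid f A) = 0 := by
    rw [Finset.sum_sub_distrib, Finset.sum_const, sum_eq_card_smul_centroid f A hA,
      ← Nat.cast_smul_eq_nsmul ℝ, sub_self]
  calc ∑ i ∈ A, ‖f i - c‖ ^ 2
      = ∑ i ∈ A, ‖(f i - centroid f A) + (centroid f A - c)‖ ^ 2 := by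
        congr 1; ext i; congr 1; abel_nf
    _ = ∑ i ∈ A, (‖f i - centroid f A‖ ^ 2
          + 2 * inner ℝ (f i - centroid f A) (centroid f A - c)
          + ‖centroid f A - c‖ ^ 2) := by
        refine Finset.sum_congr rfl fun i _ => ?_
        rw [@norm_add_sq_real]
    _ = SSQ f A + (A.card : ℝ) * ‖centroid f A - c‖ ^ 2 := by
        have h2 : ∑ i ∈ A, (2:ℝ) * inner ℝ (f i - centroid f A) (centroid f A - c) = 0 := by
          rw [← Finset.mul_sum, ← sum_inner, hzero, inner_zero_left, mul_zero]
        rw [Finset.sum_add_distrib, Finset.sum_add_distrib, h2, Finset.sum_const,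
          nsmul_eq_mul, add_zero, SSQ]

/-- Identity underlying Theorem 1 of the paper:
`‖μ_T − μ_V‖² = ((|T| + |V|)/(|T|·|V|)) · (SSQ(S) − SSQ(T) − SSQ(V))`. -/
theorem sq_dist_centroids_eq_ssq_gap (f : ι → H) (S T V : Finset ι)
    (hdisj : Disjoint T V) (hunion : T ∪ V = S)
    (hT : T.Nonempty) (hV : V.Nonempty) :
    ‖centroid f T - centroid f V‖ ^ 2 =
      (((T.card : ℝ) + (V.card : ℝ)) / ((T.card : ℝ) * (V.card : ℝ))) *
        (SSQ f S - SSQ f T - SSQ f V) := by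
  have ht : (0:ℝ) < T.card := by exact_mod_cast hT.card_pos
  have hv : (0:ℝ) < V.card := by exact_mod_cast hV.card_pos
  set t := (T.card : ℝ) with htdef
  set v := (V.card : ℝ) with hvdef
  have ht' : t ≠ 0 := ne_of_gt ht
  have hv' : v ≠ 0 := ne_of_gt hv
  have htv : t + v ≠ 0 := by positivity
  have hScard : (S.card : ℝ) = t + v := by
    rw [← hunion, Finset.card_union_of_disjoint hdisj]; push_cast; ring
  have hsumS : ∑ i ∈ S, f i = t • centroid f T + v • centroid f V := by
    rw [← hunion, Finset.sum_union hdisj, sum_eq_card_smul_centroid f T hT,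
      sum_eq_card_smul_centroid f V hV]
  have hS : centroid f S = (t+v)⁻¹ • (t • centroid f T + v • centroid f V) := by
    rw [_root_.centroid, hScard, hsumS]
  have hTs : centroid f T - centroid f S = ((t+v)⁻¹ * v) • (centroid f T - centroid f V) := by
    rw [hS]; match_scalars <;> field_simp <;> ring
  have hVs : centroid f V - centroid f S = ((t+v)⁻¹ * t) • (centroid f V - centroid f T) := by
    rw [hS]; match_scalars <;> field_simp <;> ring
  have hsplit0 : ∑ i ∈ S, ‖f i - centroid f S‖ ^ 2
      = ∑ i ∈ T, ‖f i - centroid f S‖ ^ 2 + ∑ i ∈ V, ‖f i - centroid f S‖ ^ 2 := by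
    rw [← hunion]; exact Finset.sum_union hdisj
  have hsplit : SSQ f S = (SSQ f T + t * ‖centroid f T - centroid f S‖ ^ 2)
      + (SSQ f V + v * ‖centroid f V - centroid f S‖ ^ 2) := by
    rw [SSQ, hsplit0, parallel_axis f T hT, parallel_axis f V hV]
  rw [hsplit, hTs, hVs, norm_smul, norm_smul, Real.norm_eq_abs, Real.norm_eq_abs,
    norm_sub_rev (centroid f V), mul_pow, mul_pow, sq_abs, sq_abs]
  field_simp
  ring
end

section
/- (Theorem 1: equivalence of MMD maximisation and constrained 2-means minimisation.) Let S be a nonempty finite indexed family of points in a real inner product space H, and let m be an integer with 0 < m < |S|. Consider all partitions of S into two disjoint nonempty subfamilies T and V with |V| = m. Then for any two such partitions (T, V) and (T′, V′), one has ‖μ_T − μ_V‖ ≥ ‖μ_{T′} − μ_{V′}‖ if and only if Ψ(T, V) ≤ Ψ(T′, V′). Consequently, a partition with |V| = m maximises ‖μ_T − μ_V‖ over all such partitions if and only if it minimises Ψ(T, V) over all such partitions. -/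
open Finset

variable {ι H : Type*} [DecidableEq ι] [NormedAddCommGroup H] [InnerProductSpace ℝ H]

/-- The two-cluster k-means objective `Ψ(T,V) = SSQ(T) + SSQ(V)`. -/
noncomputable def Psi (f : ι → H) (T V : Finset ι) : ℝ :=
  SSQ f T + SSQ f V


lemma ssq_eq (f : ι → H) (A : Finset ι) (hA : A.Nonempty) :
    SSQ f A = (∑ i ∈ A, ‖f i‖ ^ 2) - (A.card : ℝ) * ‖centroid f A‖ ^ 2 := by
  have h : ∀ i ∈ A, ‖f i - centroid f A‖ ^ 2
      = ‖f i‖ ^ 2 - 2 * inner ℝ (f i) (centroid f A) + ‖centroid f A‖ ^ 2 := by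
    intro i _
    rw [@norm_sub_sq_real]
  rw [SSQ, Finset.sum_congr rfl h]
  rw [Finset.sum_add_distrib, Finset.sum_sub_distrib, Finset.sum_const, ← Finset.mul_sum,
    ← sum_inner, sum_eq_card_smul_centroid f A hA, real_inner_smul_left,
    real_inner_self_eq_norm_sq, nsmul_eq_mul]
  ring

lemma psi_decomp (f : ι → H) (T V : Finset ι) (hd : Disjoint T V)
    (hT : T.Nonempty) (hV : V.Nonempty) :
    SSQ f T + SSQ f V = SSQ f (T ∪ V) -
      ((T.card : ℝ) * V.card / ((T.card : ℝ) + V.card)) *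
        ‖centroid f T - centroid f V‖ ^ 2 := by
  have ht : (0:ℝ) < T.card := by exact_mod_cast hT.card_pos
  have hv : (0:ℝ) < V.card := by exact_mod_cast hV.card_pos
  have htv : (0:ℝ) < (T.card : ℝ) + V.card := by linarith
  set a := centroid f T with ha
  set b := centroid f V with hb
  have hc : centroid f (T ∪ V) =
      ((T.card : ℝ) + V.card)⁻¹ • ((T.card : ℝ) • a + (V.card : ℝ) • b) := by
    rw [_root_.centroid, sum_union hd, sum_eq_card_smul_centroid f T hT,
      sum_eq_card_smul_centroid f V hV, card_union_of_disjoint hd]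
    push_cast
    rfl
  have e1 : ‖(T.card : ℝ) • a + (V.card : ℝ) • b‖ ^ 2 =
      (T.card : ℝ)^2 * ‖a‖^2 + 2 * ((T.card : ℝ) * V.card) * inner ℝ a b
        + (V.card : ℝ)^2 * ‖b‖^2 := by
    rw [@norm_add_sq_real, norm_smul, norm_smul, real_inner_smul_left,
      real_inner_smul_right, Real.norm_eq_abs, Real.norm_eq_abs,
      abs_of_nonneg ht.le, abs_of_nonneg hv.le]
    ring
  have e2 : ‖a - b‖ ^ 2 = ‖a‖^2 - 2 * inner ℝ a b + ‖b‖^2 := by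
    rw [@norm_sub_sq_real]
  have hc2 : ‖centroid f (T ∪ V)‖ ^ 2 =
      (((T.card : ℝ) + V.card)⁻¹)^2 * ‖(T.card : ℝ) • a + (V.card : ℝ) • b‖ ^ 2 := by
    rw [hc, norm_smul, mul_pow, Real.norm_eq_abs, sq_abs]
  rw [ssq_eq f T hT, ssq_eq f V hV, ssq_eq f (T ∪ V) ⟨hT.choose, mem_union_left _ hT.choose_spec⟩,
    sum_union hd, card_union_of_disjoint hd, hc2, e1, e2]
  push_cast
  field_simp
  ring

/-- Theorem 1: for partitions of `S` into two disjoint nonempty clusters `T, V`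
with prescribed validation size `|V| = m`, the MMD `‖μ_T − μ_V‖` is monotonically
decreasing in the k-means objective `Ψ(T,V)`; consequently a partition maximises
the MMD over all such partitions iff it minimises `Ψ`. -/
theorem mmd_max_iff_kmeans_min (f : ι → H) (S : Finset ι) (hS : S.Nonempty)
    (m : ℕ) (hm : 0 < m) (hmS : m < S.card) :
    (∀ T V T' V' : Finset ι,
      Disjoint T V → T ∪ V = S → T.Nonempty → V.Nonempty → V.card = m →
      Disjoint T' V' → T' ∪ V' = S → T'.Nonempty → V'.Nonempty → V'.card = m →
      (‖centroid f T - centroid f V‖ ≥ ‖centroid f T' - centroid f V'‖ ↔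
        Psi f T V ≤ Psi f T' V')) ∧
    (∀ T V : Finset ι,
      Disjoint T V → T ∪ V = S → T.Nonempty → V.Nonempty → V.card = m →
      ((∀ T' V' : Finset ι,
          Disjoint T' V' → T' ∪ V' = S → T'.Nonempty → V'.Nonempty → V'.card = m →
          ‖centroid f T' - centroid f V'‖ ≤ ‖centroid f T - centroid f V‖) ↔
        (∀ T' V' : Finset ι,
          Disjoint T' V' → T' ∪ V' = S → T'.Nonempty → V'.Nonempty → V'.card = m →
          Psi f T V ≤ Psi f T' V'))) := by
  set c : ℝ := ((S.card : ℝ) - m) * m / S.card with hcdef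
  have hSc : (0:ℝ) < S.card := by exact_mod_cast hS.card_pos
  have hc : 0 < c := by
    apply div_pos _ hSc
    have : (m:ℝ) < S.card := by exact_mod_cast hmS
    have : (0:ℝ) < m := by exact_mod_cast hm
    apply mul_pos <;> linarith
  have key : ∀ T V : Finset ι,
      Disjoint T V → T ∪ V = S → T.Nonempty → V.Nonempty → V.card = m →
      Psi f T V = SSQ f S - c * ‖centroid f T - centroid f V‖ ^ 2 := by
    intro T V hd hu hT hV hVm
    have hcards : T.card + V.card = S.card := by
      rw [← card_union_of_disjoint hd, hu]
    have hVc : (V.card : ℝ) = m := by exact_mod_cast hVm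
    have hTc : (T.card : ℝ) = (S.card : ℝ) - m := by
      have : (T.card : ℝ) + V.card = S.card := by exact_mod_cast hcards
      linarith
    have hrw : (S.card : ℝ) - m + m = S.card := by ring
    rw [Psi, psi_decomp f T V hd hT hV, hu, hTc, hVc, hrw]
  have main : ∀ T V T' V' : Finset ι,
      Disjoint T V → T ∪ V = S → T.Nonempty → V.Nonempty → V.card = m →
      Disjoint T' V' → T' ∪ V' = S → T'.Nonempty → V'.Nonempty → V'.card = m →
      (‖centroid f T - centroid f V‖ ≥ ‖centroid f T' - centroid f V'‖ ↔
        Psi f T V ≤ Psi f T' V') := by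
    intro T V T' V' hd hu hT hV hVm hd' hu' hT' hV' hVm'
    rw [key T V hd hu hT hV hVm, key T' V' hd' hu' hT' hV' hVm']
    have hx := norm_nonneg (centroid f T - centroid f V)
    have hy := norm_nonneg (centroid f T' - centroid f V')
    constructor
    · intro h
      have h2 := pow_le_pow_left₀ hy h 2
      nlinarith
    · intro h
      have h3 : ‖centroid f T' - centroid f V'‖ ^ 2 ≤
          ‖centroid f T - centroid f V‖ ^ 2 := by nlinarith
      nlinarith
  refine ⟨main, fun T V hd hu hT hV hVm => ⟨?_, ?_⟩⟩
  · intro h T' V' hd' hu' hT' hV' hVm'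
    exact (main T V T' V' hd hu hT hV hVm hd' hu' hT' hV' hVm').mp
      (h T' V' hd' hu' hT' hV' hVm')
  · intro h T' V' hd' hu' hT' hV' hVm'
    exact (main T V T' V' hd hu hT hV hVm hd' hu' hT' hV' hVm').mpr
      (h T' V' hd' hu' hT' hV' hVm')
end
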